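/- In a product system X = Y×W with S = σ×id and T = id×τ, the cube set Q_{S,T}(X) equals the set of all quadruples ((y1,w1),(y2,w1),(y1,w2),(y2,w2)) with y1,y2 ∈ Y and w1,w2 ∈ W, provided (Y,σ) and (W,τ) are minimal. -/

import Mathlib

/-- The `n`-th integer iterate of a homeomorphism, as a function. -/
def hpow {X : Type*} [TopologicalSpace X] (S : X ≃ₜ X) (n : ℤ) : X → X :=
  ⇑(S.toEquiv ^ n)

variable {X : Type*} [TopologicalSpace X]

def cube (S T : X ≃ₜ X) : Set (X × X × X × X) :=
  closure {p | ∃ (x : X) (n m : ℤ),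
    p = (x, hpow S n x, hpow T m x, hpow S n (hpow T m x))}

def cube2 (S : X ≃ₜ X) : Set (X × X) :=
  closure {p | ∃ (x : X) (n : ℤ), p = (x, hpow S n x)}

def relS (S T : X ≃ₜ X) : Set (X × X) :=
  {p | ∃ a : X, (p.1, p.2, a, a) ∈ cube S T}

def relT (S T : X ≃ₜ X) : Set (X × X) :=
  {p | ∃ b : X, (p.1, b, p.2, b) ∈ cube S T}

def minimalST (S T : X ≃ₜ X) : Prop :=
  ∀ x : X, Dense {y : X | ∃ n m : ℤ, y = hpow S n (hpow T m x)}

def minimal1 (S : X ≃ₜ X) : Prop :=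
  ∀ x : X, Dense {y : X | ∃ n : ℤ, y = hpow S n x}

def distalST {Y : Type*} [MetricSpace Y] (S T : Y ≃ₜ Y) : Prop :=
  ∀ x y : Y, x ≠ y → ∃ ε > 0, ∀ n m : ℤ,
    ε ≤ dist (hpow S n (hpow T m x)) (hpow S n (hpow T m y))

def proxT {Y : Type*} [MetricSpace Y] (T : Y ≃ₜ Y) : Set (Y × Y) :=
  {p | ∀ ε > 0, ∃ m : ℤ, dist (hpow T m p.1) (hpow T m p.2) < ε}

/-! ### Auxiliary lemmas -/

def phiL (Y W : Type*) : Equiv.Perm Y →* Equiv.Perm (Y × W) where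
  toFun e := e.prodCongr (Equiv.refl W)
  map_one' := by ext x <;> rfl
  map_mul' a b := by ext x <;> rfl

def phiR (Y W : Type*) : Equiv.Perm W →* Equiv.Perm (Y × W) where
  toFun e := (Equiv.refl Y).prodCongr e
  map_one' := by ext x <;> rfl
  map_mul' a b := by ext x <;> rfl

lemma hpowS {Y W : Type*} [TopologicalSpace Y] [TopologicalSpace W]
    (σ : Y ≃ₜ Y) (n : ℤ) (y : Y) (w : W) :
    hpow (σ.prodCongr (Homeomorph.refl W)) n (y, w) = (hpow σ n y, w) := by
  have h : (σ.prodCongr (Homeomorph.refl W)).toEquiv = phiL Y W σ.toEquiv := rfl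
  rw [hpow, h, ← map_zpow]
  rfl

lemma hpowT {Y W : Type*} [TopologicalSpace Y] [TopologicalSpace W]
    (τ : W ≃ₜ W) (m : ℤ) (y : Y) (w : W) :
    hpow ((Homeomorph.refl Y).prodCongr τ) m (y, w) = (y, hpow τ m w) := by
  have h : ((Homeomorph.refl Y).prodCongr τ).toEquiv = phiR Y W τ.toEquiv := rfl
  rw [hpow, h, ← map_zpow]
  rfl

theorem stmt5 {Y W : Type*} [MetricSpace Y] [CompactSpace Y]
    [MetricSpace W] [CompactSpace W] (σ : Y ≃ₜ Y) (τ : W ≃ₜ W)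
    (hσ : minimal1 σ) (hτ : minimal1 τ) :
    cube (σ.prodCongr (Homeomorph.refl W)) ((Homeomorph.refl Y).prodCongr τ)
      = {q | ∃ (y1 y2 : Y) (w1 w2 : W),
          q = ((y1, w1), (y2, w1), (y1, w2), (y2, w2))} := by
  set X := Y × W
  set S := σ.prodCongr (Homeomorph.refl W) with hS
  set T := (Homeomorph.refl Y).prodCongr τ with hT
  apply Set.Subset.antisymm
  · apply closure_minimal
    · rintro p ⟨⟨y, w⟩, n, m, rfl⟩
      refine ⟨y, hpow σ n y, w, hpow τ m w, ?_⟩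
      simp only [hS, hT, hpowS, hpowT]
    · have heq : {q : X × X × X × X | ∃ (y1 y2 : Y) (w1 w2 : W),
          q = ((y1, w1), (y2, w1), (y1, w2), (y2, w2))}
          = (fun a : (Y × Y) × W × W =>
            (((a.1.1, a.2.1) : X), ((a.1.2, a.2.1) : X),
             ((a.1.1, a.2.2) : X), ((a.1.2, a.2.2) : X))) '' Set.univ := by
        ext q
        constructor
        · rintro ⟨y1, y2, w1, w2, rfl⟩
          exact ⟨((y1, y2), (w1, w2)), trivial, rfl⟩
        · rintro ⟨a, -, rfl⟩
          exact ⟨a.1.1, a.1.2, a.2.1, a.2.2, rfl⟩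
      rw [heq]
      exact (isCompact_univ.image (by fun_prop)).isClosed
  · rintro q ⟨y1, y2, w1, w2, rfl⟩
    set F : Y × W → X × X × X × X :=
      fun a => ((y1, w1), (a.1, w1), (y1, a.2), (a.1, a.2)) with hF
    have hFc : Continuous F := by fun_prop
    set A : Set Y := {y : Y | ∃ n : ℤ, y = hpow σ n y1}
    set B : Set W := {w : W | ∃ m : ℤ, w = hpow τ m w1}
    have hmem : (y2, w2) ∈ closure (A ×ˢ B) := by
      rw [closure_prod_eq]
      exact ⟨hσ y1 y2, hτ w1 w2⟩
    have himg : F '' (A ×ˢ B) ⊆ {p : X × X × X × X | ∃ (x : X) (n m : ℤ),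
        p = (x, hpow S n x, hpow T m x, hpow S n (hpow T m x))} := by
      rintro p ⟨⟨a, b⟩, ⟨⟨n, rfl⟩, ⟨m, rfl⟩⟩, rfl⟩
      refine ⟨(y1, w1), n, m, ?_⟩
      simp only [hS, hT, hpowS, hpowT, hF]
    have : F (y2, w2) ∈ closure (F '' (A ×ˢ B)) :=
      image_closure_subset_closure_image hFc (Set.mem_image_of_mem F hmem)
    exact closure_mono himg this
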